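/- Let (L, ⊔) be a finite join-semilattice with separated equalizers, and suppose a, b, c, d ∈ L satisfy a ≤ b, a ≤ c, c ≤ d, and b ⊔ c = b ⊔ d. Then there exists x ∈ L with a ≤ x ≤ b such that either x ⊔ c = d, or x ⊔ c and d are incomparable (neither x ⊔ c ≤ d nor d ≤ x ⊔ c). -/

import Mathlib

/-- A join-semilattice has separated equalizers if, for every equalizing pair `x ≤ y`
(a pair for which there exist `a, b` with `x ⊔ a ≠ x ⊔ b`, `y ⊔ a = y ⊔ b`,
`x ⊔ a ≠ y ⊔ a`, and `x ⊔ b ≠ y ⊔ b`), there exists `z` with `x < z < y`. -/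
def SeparatedEqualizers (L : Type*) [SemilatticeSup L] : Prop :=
  ∀ x y : L, x ≤ y →
    (∃ a b : L, x ⊔ a ≠ x ⊔ b ∧ y ⊔ a = y ⊔ b ∧ x ⊔ a ≠ y ⊔ a ∧ x ⊔ b ≠ y ⊔ b) →
    ∃ z : L, x < z ∧ z < y

/-- In a finite join-semilattice with separated equalizers, if `a ≤ b`, `a ≤ c ≤ d`,
and `b ⊔ c = b ⊔ d`, then there exists `x` with `a ≤ x ≤ b` such that either
`x ⊔ c = d` or `x ⊔ c` and `d` are incomparable. -/
theorem stmt15 {L : Type*} [SemilatticeSup L] [Fintype L]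
    (hsep : SeparatedEqualizers L) (a b c d : L)
    (hab : a ≤ b) (hac : a ≤ c) (hcd : c ≤ d) (heq : b ⊔ c = b ⊔ d) :
    ∃ x : L, a ≤ x ∧ x ≤ b ∧
      (x ⊔ c = d ∨ (¬ x ⊔ c ≤ d ∧ ¬ d ≤ x ⊔ c)) := by
  by_contra hcon
  push_neg at hcon
  -- the set of y in [a,b] with y ⊔ c ≤ d
  classical
  set S : Finset L := Finset.univ.filter (fun y => a ≤ y ∧ y ≤ b ∧ y ⊔ c ≤ d) with hS
  have haS : a ∈ S := by
    simp only [hS, Finset.mem_filter, Finset.mem_univ, true_and]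
    exact ⟨le_refl a, hab, sup_le (hac.trans hcd) hcd⟩
  obtain ⟨x, hxS, hxmax⟩ := S.exists_maximal ⟨a, haS⟩
  simp only [hS, Finset.mem_filter, Finset.mem_univ, true_and] at hxS
  obtain ⟨hax, hxb, hxcd⟩ := hxS
  have hxcne : x ⊔ c ≠ d := (hcon x hax hxb).1
  have hxclt : x ⊔ c < d := lt_of_le_of_ne hxcd hxcne
  have hxd : x ⊔ d = d := sup_eq_right.mpr ((le_sup_left.trans hxcd))
  -- key claim : no w with x < w ≤ b
  have key : ∀ w : L, x < w → w ≤ b → False := by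
    intro w
    induction w using WellFoundedLT.induction with
    | _ w ih =>
      intro hxw hwb
      have haw : a ≤ w := hax.trans hxw.le
      have hwnot : ¬ w ⊔ c ≤ d := by
        intro h
        refine absurd (hxmax ?_ hxw.le) (not_le_of_gt hxw)
        simp only [hS, Finset.mem_filter, Finset.mem_univ, true_and]
        exact ⟨haw, hwb, h⟩
      have hdw : d ≤ w ⊔ c := by
        rcases (hcon w haw hwb).2 hwnot with h
        exact h
      have hwcd : w ⊔ c = w ⊔ d :=
        le_antisymm (sup_le_sup_left hcd w) (sup_le le_sup_left hdw)
      have hne4 : x ⊔ d ≠ w ⊔ d := by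
        intro h
        apply hwnot
        rw [hxd] at h
        exact le_of_eq (hwcd.trans h.symm)
      obtain ⟨z, hxz, hzw⟩ := hsep x w hxw.le
        ⟨c, d, by rw [hxd]; exact hxclt.ne, hwcd,
          fun h => absurd (hdw.trans h.ge) (not_le_of_gt hxclt), hne4⟩
      exact ih z hzw hxz (hzw.le.trans hwb)
  -- x < b
  have hxltb : x < b :=
    lt_of_le_of_ne hxb (fun h => hxcne (le_antisymm hxcd (h ▸ heq ▸ le_sup_right)))
  exact key b hxltb le_rfl
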